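/- Let H be a finite simple graph and d a positive integer. Then H admits a 1-local d-dimensional box representation if and only if the vertex set of H can be partitioned into d (possibly empty) parts V_1, …, V_d such that every edge of the complement Hᶜ joins two vertices of the same part and for each i the restriction of Hᶜ to V_i is a co-interval graph (i.e., Hᶜ is the vertex-disjoint union of d co-interval graphs). -/

import Mathlib

universe u

/-- A graph is an interval graph if its vertices can be assigned nonempty closed
intervals of `ℝ` so that distinct vertices are adjacent iff their intervals meet. -/
def IsIntervalGraph {V : Type*} (G : SimpleGraph V) : Prop :=
  ∃ I : V → Set ℝ,
    (∀ v, ∃ a b : ℝ, a ≤ b ∧ I v = Set.Icc a b) ∧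
    ∀ u v : V, u ≠ v → (G.Adj u v ↔ (I u ∩ I v).Nonempty)

/-- A co-interval graph is the complement of an interval graph. -/
def IsCoIntervalGraph {V : Type*} (G : SimpleGraph V) : Prop :=
  IsIntervalGraph Gᶜ

/-- `G` is a vertex-disjoint union of co-interval graphs: its vertex set can be
partitioned (here via the fibers of a map `c`) so that every edge joins two vertices of
the same part and the restriction to each part is a co-interval graph. -/
def IsUnionCoIntervalGraph {V : Type u} (G : SimpleGraph V) : Prop :=
  ∃ (ι : Type u) (c : V → ι),
    (∀ u v : V, G.Adj u v → c u = c v) ∧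
    ∀ i : ι, IsCoIntervalGraph (G.induce {v | c v = i})

/-- There is a covering of the edges of `Hᶜ` by finitely many subgraphs
`G 0, …, G (t-1)` of `Hᶜ`, each of which restricted to its non-isolated vertices is a
co-interval graph, such that every vertex is a non-isolated vertex of at most `s`
of them. -/
def LocalCoverLE {V : Type u} (H : SimpleGraph V) (s : ℕ) : Prop :=
  ∃ (t : ℕ) (G : Fin t → SimpleGraph V),
    (∀ i, G i ≤ Hᶜ) ∧
    (∀ u v : V, Hᶜ.Adj u v → ∃ i, (G i).Adj u v) ∧
    (∀ i, IsCoIntervalGraph ((G i).induce (G i).support)) ∧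
    ∀ v : V, {i : Fin t | v ∈ (G i).support}.ncard ≤ s

/-- The local boxicity of `H`. -/
noncomputable def localBoxicity {V : Type u} (H : SimpleGraph V) : ℕ :=
  sInf {s : ℕ | LocalCoverLE H s}

/-- The union boxicity of `H`: the least `k` such that `Hᶜ` is covered by `k`
subgraphs, each a vertex-disjoint union of co-interval graphs. -/
noncomputable def unionBoxicity {V : Type u} (H : SimpleGraph V) : ℕ :=
  sInf {k : ℕ | ∃ G : Fin k → SimpleGraph V,
    (∀ i, G i ≤ Hᶜ) ∧
    (∀ u v : V, Hᶜ.Adj u v → ∃ i, (G i).Adj u v) ∧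
    ∀ i, IsUnionCoIntervalGraph (G i)}

/-- The boxicity of `H`: the least `d` such that `H` is the intersection of `d`
interval graphs on its vertex set. -/
noncomputable def boxicity {V : Type u} (H : SimpleGraph V) : ℕ :=
  sInf {d : ℕ | ∃ G : Fin d → SimpleGraph V,
    (∀ i, IsIntervalGraph (G i)) ∧
    ∀ u v : V, u ≠ v → (H.Adj u v ↔ ∀ i, (G i).Adj u v)}

/-- A `k`-local `d`-dimensional box representation of `H`: each vertex `v` gets a box
`B v = J v 0 × ⋯ × J v (d-1) ⊆ ℝ^d` where each factor is either all of `ℝ` or a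
nonempty closed bounded interval, at most `k` factors differ from `ℝ`, and two distinct
vertices are adjacent in `H` iff their boxes intersect. -/
def HasLocalBoxRep {V : Type u} (H : SimpleGraph V) (k d : ℕ) : Prop :=
  ∃ J : V → Fin d → Set ℝ,
    (∀ (v : V) (i : Fin d), J v i = Set.univ ∨ ∃ a b : ℝ, a ≤ b ∧ J v i = Set.Icc a b) ∧
    (∀ v : V, {i : Fin d | J v i ≠ Set.univ}.ncard ≤ k) ∧
    ∀ u v : V, u ≠ v → (H.Adj u v ↔
      ({p : Fin d → ℝ | ∀ i, p i ∈ J u i} ∩ {p : Fin d → ℝ | ∀ i, p i ∈ J v i}).Nonempty)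

private lemma box_inter_nonempty {d : ℕ} (A B : Fin d → Set ℝ) :
    ({p : Fin d → ℝ | ∀ i, p i ∈ A i} ∩ {p : Fin d → ℝ | ∀ i, p i ∈ B i}).Nonempty ↔
      ∀ i, (A i ∩ B i).Nonempty := by
  constructor
  · rintro ⟨p, hA, hB⟩ i
    exact ⟨p i, hA i, hB i⟩
  · intro h
    choose p hp using h
    exact ⟨p, fun i => (hp i).1, fun i => (hp i).2⟩

/-- A finite graph `H` admits a 1-local `d`-dimensional box
representation iff its vertex set can be partitioned into `d` (possibly empty) parts so
that every edge of `Hᶜ` joins two vertices of the same part and the restriction of `Hᶜ`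
to each part is a co-interval graph. -/
theorem stmt_14 {V : Type} [Fintype V] (H : SimpleGraph V) (d : ℕ) (hd : 0 < d) :
    HasLocalBoxRep H 1 d ↔
    ∃ c : V → Fin d,
      (∀ u v : V, Hᶜ.Adj u v → c u = c v) ∧
      ∀ i : Fin d, IsCoIntervalGraph (Hᶜ.induce {v | c v = i}) := by
  classical
  constructor
  · rintro ⟨J, hIcc, hcard, hadj⟩
    have hne : ∀ v i, (J v i).Nonempty := by
      intro v i
      rcases hIcc v i with h | ⟨a, b, hab, h⟩
      · rw [h]; exact Set.univ_nonempty
      · rw [h]; exact Set.nonempty_Icc.mpr hab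
    set c : V → Fin d := fun v =>
      if h : ∃ i, J v i ≠ Set.univ then h.choose else ⟨0, hd⟩ with hcdef
    have hkey : ∀ v j, J v j ≠ Set.univ → c v = j := by
      intro v j hj
      have hex : ∃ i, J v i ≠ Set.univ := ⟨j, hj⟩
      have h1 : J v hex.choose ≠ Set.univ := hex.choose_spec
      have h2 : c v = hex.choose := by simp [hcdef, dif_pos hex]
      rw [h2]
      exact (Set.ncard_le_one (Set.toFinite _)).mp (hcard v) _ h1 _ hj
    have hkey' : ∀ v j, c v ≠ j → J v j = Set.univ := by
      intro v j h
      by_contra hne'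
      exact h (hkey v j hne')
    refine ⟨c, ?_, ?_⟩
    · intro u v huv
      rw [SimpleGraph.compl_adj] at huv
      obtain ⟨hne', hnadj⟩ := huv
      have hbox : ¬ ∀ i, (J u i ∩ J v i).Nonempty := fun h =>
        hnadj ((hadj u v hne').mpr ((box_inter_nonempty _ _).mpr h))
      push_neg at hbox
      obtain ⟨i, hi⟩ := hbox
      have hu : J u i ≠ Set.univ := by
        intro h
        rw [h, Set.univ_inter] at hi
        exact (hne v i).ne_empty hi
      have hv : J v i ≠ Set.univ := by
        intro h
        rw [h, Set.inter_univ] at hi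
        exact (hne u i).ne_empty hi
      rw [hkey u i hu, hkey v i hv]
    · intro i
      have hx : ∀ v : {v : V | c v = i}, (J (v : V) i).Nonempty := fun v => hne _ i
      choose x hxmem using hx
      obtain ⟨M, hM⟩ := Finite.exists_le x
      obtain ⟨m, hm⟩ := Finite.exists_le (fun v => -x v)
      set lo : ℝ := min (-m) M with hlo
      set hi : ℝ := max (-m) M with hhi
      have hlohi : lo ≤ hi := (min_le_left _ _).trans (le_max_left _ _)
      have hxlo : ∀ v, lo ≤ x v := fun v =>
        (min_le_left _ _).trans (by linarith [hm v])
      have hxhi : ∀ v, x v ≤ hi := fun v => (hM v).trans (le_max_right _ _)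
      set I : {v : V | c v = i} → Set ℝ := fun v =>
        if J (v : V) i = Set.univ then Set.Icc lo hi else J (v : V) i with hIdef
      refine ⟨I, ?_, ?_⟩
      · intro v
        by_cases h : J (v : V) i = Set.univ
        · exact ⟨lo, hi, hlohi, by simp [hIdef, h]⟩
        · rcases hIcc (v : V) i with h' | ⟨a, b, hab, h'⟩
          · exact absurd h' h
          · exact ⟨a, b, hab, by simp only [hIdef, if_neg h]; exact h'⟩
      · intro u v huv
        have hcoe : (u : V) ≠ (v : V) := fun h => huv (Subtype.ext h)
        have hIiff : (I u ∩ I v).Nonempty ↔ (J (u : V) i ∩ J (v : V) i).Nonempty := by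
          by_cases h1 : J (u : V) i = Set.univ
          · by_cases h2 : J (v : V) i = Set.univ
            · simp only [hIdef, if_pos h1, if_pos h2, h1, h2, Set.univ_inter, Set.inter_self]
              exact ⟨fun _ => Set.univ_nonempty, fun _ => ⟨lo, Set.mem_Icc.mpr ⟨le_refl lo, hlohi⟩⟩⟩
            · simp only [hIdef, if_pos h1, if_neg h2, h1, Set.univ_inter]
              constructor
              · intro _; exact hne _ i
              · intro _
                exact ⟨x v, Set.mem_Icc.mpr ⟨hxlo v, hxhi v⟩, hxmem v⟩
          · by_cases h2 : J (v : V) i = Set.univ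
            · simp only [hIdef, if_neg h1, if_pos h2, h2, Set.inter_univ]
              constructor
              · intro _; exact hne _ i
              · intro _
                exact ⟨x u, hxmem u, Set.mem_Icc.mpr ⟨hxlo u, hxhi u⟩⟩
            · simp only [hIdef, if_neg h1, if_neg h2]
        have hLHS : ((Hᶜ.induce {v : V | c v = i})ᶜ).Adj u v ↔ H.Adj (u : V) (v : V) := by
          simp only [SimpleGraph.compl_adj, SimpleGraph.comap_adj, SimpleGraph.induce_eq_coe_induce_top]
          constructor
          · rintro ⟨_, h⟩
            by_contra hH
            exact h ⟨u.2, v.2, (SimpleGraph.compl_adj H _ _).mpr ⟨hcoe, hH⟩⟩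
          · intro hH
            refine ⟨huv, fun h => ?_⟩
            have := (SimpleGraph.compl_adj H (u : V) (v : V)).mp h.2.2
            exact this.2 hH
        show ((Hᶜ.induce {v : V | c v = i})ᶜ).Adj u v ↔ (I u ∩ I v).Nonempty
        rw [hLHS, hadj _ _ hcoe, box_inter_nonempty, hIiff]
        constructor
        · intro h; exact h i
        · intro h j
          by_cases hj : j = i
          · subst hj; exact h
          · have h1 : J (u : V) j = Set.univ := hkey' _ _ (by rw [u.2]; exact fun hh => hj hh.symm)
            rw [h1, Set.univ_inter]
            exact hne _ j
  · rintro ⟨c, hc, hco⟩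
    choose I hIcc hadj using fun i => (hco i)
    have Ine : ∀ (i : Fin d) (w : {v : V | c v = i}), (I i w).Nonempty := by
      intro i w
      obtain ⟨a, b, hab, h⟩ := hIcc i w
      rw [h]; exact Set.nonempty_Icc.mpr hab
    set J : V → Fin d → Set ℝ := fun v j =>
      if h : c v = j then I j ⟨v, h⟩ else Set.univ with hJdef
    have hcompl : ∀ (i : Fin d) (u v : {v : V | c v = i}), (u : V) ≠ (v : V) →
        (((Hᶜ.induce {v : V | c v = i})ᶜ).Adj u v ↔ H.Adj (u : V) (v : V)) := by
      intro i u v hcoe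
      simp only [SimpleGraph.compl_adj, SimpleGraph.comap_adj, SimpleGraph.induce_eq_coe_induce_top]
      constructor
      · rintro ⟨_, h⟩
        by_contra hH
        exact h ⟨u.2, v.2, (SimpleGraph.compl_adj H _ _).mpr ⟨hcoe, hH⟩⟩
      · intro hH
        refine ⟨fun h => hcoe (congrArg Subtype.val h), fun h => ?_⟩
        have := (SimpleGraph.compl_adj H (u : V) (v : V)).mp h.2.2
        exact this.2 hH
    refine ⟨J, ?_, ?_, ?_⟩
    · intro v j
      by_cases h : c v = j
      · right
        obtain ⟨a, b, hab, h'⟩ := hIcc j ⟨v, h⟩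
        exact ⟨a, b, hab, by rw [hJdef]; simp only [dif_pos h]; exact h'⟩
      · left; rw [hJdef]; simp [dif_neg h]
    · intro v
      have hsub : {j : Fin d | J v j ≠ Set.univ} ⊆ {c v} := by
        intro j hj
        by_contra h
        have hne' : c v ≠ j := fun hh => h (by simp [hh])
        exact hj (by rw [hJdef]; simp [dif_neg hne'])
      calc {j : Fin d | J v j ≠ Set.univ}.ncard ≤ ({c v} : Set (Fin d)).ncard :=
            Set.ncard_le_ncard hsub (Set.finite_singleton _)
        _ = 1 := Set.ncard_singleton _
    · intro u v huv
      rw [box_inter_nonempty]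
      by_cases hcv : c u = c v
      · have key := hadj (c u) ⟨u, rfl⟩ ⟨v, hcv.symm⟩
          (fun h => huv (congrArg Subtype.val h))
        rw [hcompl (c u) ⟨u, rfl⟩ ⟨v, hcv.symm⟩ huv] at key
        rw [key]
        have hJu : J u (c u) = I (c u) ⟨u, rfl⟩ := by rw [hJdef]; simp
        have hJv : J v (c u) = I (c u) ⟨v, hcv.symm⟩ := by
          rw [hJdef]; simp only [dif_pos hcv.symm]
        constructor
        · intro h j
          by_cases hj : c u = j
          · subst hj; rw [hJu, hJv]; exact h
          · have h1 : J u j = Set.univ := by rw [hJdef]; simp [dif_neg hj]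
            have h2 : J v j = Set.univ := by
              rw [hJdef]; simp [dif_neg (hcv ▸ hj : c v ≠ j)]
            rw [h1, h2, Set.univ_inter]; exact Set.univ_nonempty
        · intro h
          have := h (c u)
          rwa [hJu, hJv] at this
      · have hH : H.Adj u v := by
          by_contra hH
          exact hcv (hc u v ((SimpleGraph.compl_adj H u v).mpr ⟨huv, hH⟩))
        simp only [hH, true_iff]
        intro j
        by_cases h1 : c u = j
        · have h2 : c v ≠ j := fun hh => hcv (h1.trans hh.symm)
          have hJv : J v j = Set.univ := by rw [hJdef]; simp [dif_neg h2]
          rw [hJv, Set.inter_univ]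
          rw [hJdef]; simp only [dif_pos h1]
          exact Ine j ⟨u, h1⟩
        · have hJu : J u j = Set.univ := by rw [hJdef]; simp [dif_neg h1]
          rw [hJu, Set.univ_inter]
          by_cases h2 : c v = j
          · rw [hJdef]; simp only [dif_pos h2]; exact Ine j ⟨v, h2⟩
          · rw [hJdef]; simp [dif_neg h2]
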